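/- arXiv:2306.13722 — 3 statements merged into one kernel-verified Lean document; each statement's English description precedes it below -/
import Mathlib

section
/- Let ζ ∈ T, u, v ∈ C, and set z_1 = ζ e^{u/n}, z_2 = ζ e^{v/n}. Then (1 - conj(z_2)^n z_1^n)/(n(1 - conj(z_2) z_1)) converges to (e^{u + conj(v)} - 1)/(u + conj(v)) as n → ∞, uniformly for (u,v) in compact subsets of C × C (with the convention that (e^w - 1)/w = 1 at w = 0). -/
open Filter Complex

noncomputable def phi (z : ℂ) : ℂ := if z = 0 then 1 else (Complex.exp z - 1) / z

lemma phi_zero : phi 0 = 1 := if_pos rfl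

lemma exp_sub_one_eq (z : ℂ) : Complex.exp z - 1 = z * phi z := by
  by_cases h : z = 0
  · simp [phi, h]
  · rw [phi, if_neg h]
    field_simp

lemma continuous_phi : Continuous phi := by
  rw [continuous_iff_continuousAt]
  intro z
  by_cases h : z = 0
  · subst h
    have h1 : Tendsto (fun w => (Complex.exp w - 1) / w) (nhdsWithin 0 {0}ᶜ) (nhds 1) := by
      have := Complex.hasDerivAt_exp 0
      rw [hasDerivAt_iff_tendsto_slope] at this
      simp only [Complex.exp_zero] at this
      refine this.congr fun w => ?_
      rw [slope_def_field]
      simp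
    have h2 : Tendsto phi (nhdsWithin 0 {0}ᶜ) (nhds 1) := by
      refine h1.congr' ?_
      filter_upwards [self_mem_nhdsWithin] with w hw
      simp only [Set.mem_compl_iff, Set.mem_singleton_iff] at hw
      simp [phi, hw]
    rw [ContinuousAt, phi_zero, ← nhdsNE_sup_pure]
    exact h2.sup (by simpa [phi_zero] using tendsto_pure_nhds phi 0)
  · have hev : ∀ᶠ w in nhds z, phi w = (Complex.exp w - 1) / w := by
      filter_upwards [isOpen_compl_singleton.mem_nhds h] with w hw
      simp only [Set.mem_compl_iff, Set.mem_singleton_iff] at hw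
      simp [phi, hw]
    exact ContinuousAt.congr
      ((Complex.continuous_exp.continuousAt.sub continuousAt_const).div continuousAt_id h)
      (hev.mono fun w hw => hw.symm)

lemma key (M : ℝ) {ε : ℝ} (hε : 0 < ε) :
    ∃ N : ℕ, ∀ n : ℕ, N ≤ n → ∀ w : ℂ, ‖w‖ ≤ M →
      dist (phi w)
        (if Complex.exp (w / n) = 1 then 1
         else (1 - Complex.exp w) / ((n : ℂ) * (1 - Complex.exp (w / n)))) < ε := by
  obtain ⟨C, hC⟩ := (isCompact_closedBall (0:ℂ) M).exists_bound_of_continuousOn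
    continuous_phi.continuousOn
  set C' : ℝ := max C 0 with hC'def
  have hC'0 : 0 ≤ C' := le_max_right _ _
  set ε₁ : ℝ := min (1/2) (ε / (2 * (C' + 1))) with hε₁def
  have hε₁pos : 0 < ε₁ := by
    apply lt_min (by norm_num)
    positivity
  obtain ⟨δ, hδpos, hδ⟩ := Metric.continuousAt_iff.mp (continuous_phi.continuousAt (x := 0)) ε₁ hε₁pos
  set δ' : ℝ := min δ 1 with hδ'def
  have hδ'pos : 0 < δ' := lt_min hδpos one_pos
  obtain ⟨N₀, hN₀⟩ := exists_nat_gt (M / δ')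
  refine ⟨max N₀ 1, fun n hn w hw => ?_⟩
  have hn1 : 1 ≤ n := le_trans (le_max_right _ _) hn
  have hnR : (0:ℝ) < n := by exact_mod_cast hn1
  have hnC : (n:ℂ) ≠ 0 := by exact_mod_cast Nat.one_le_iff_ne_zero.mp hn1
  have hM0 : 0 ≤ M := le_trans (norm_nonneg w) hw
  have hwn : ‖w / (n:ℂ)‖ < δ' := by
    rw [norm_div]
    have h1 : M / δ' < (n:ℝ) := lt_of_lt_of_le hN₀ (by exact_mod_cast le_trans (le_max_left _ _) hn)
    have h2 : M < n * δ' := by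
      rw [div_lt_iff₀ hδ'pos] at h1; linarith
    calc ‖w‖ / ‖(n:ℂ)‖ ≤ M / n := by
            rw [Complex.norm_natCast]
            gcongr
      _ < δ' := by rw [div_lt_iff₀ hnR]; linarith [h2]
  by_cases hw0 : w = 0
  · simp [hw0, phi_zero]
    positivity
  · have hz : w / (n:ℂ) ≠ 0 := div_ne_zero hw0 hnC
    have hwn1 : ‖w / (n:ℂ)‖ < 1 := lt_of_lt_of_le hwn (min_le_right _ _)
    have hexp : Complex.exp (w / n) ≠ 1 := by
      intro h
      rw [Complex.exp_eq_one_iff] at h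
      obtain ⟨k, hk⟩ := h
      have hk0 : k ≠ 0 := by
        rintro rfl
        rw [Int.cast_zero, zero_mul] at hk
        exact hz hk
      have : (1:ℝ) ≤ ‖w / (n:ℂ)‖ := by
        rw [hk]
        rw [norm_mul, norm_mul, norm_mul, Complex.norm_intCast, Complex.norm_I,
          Complex.norm_real, Complex.norm_ofNat, Real.norm_eq_abs]
        have h1 : (1:ℝ) ≤ |(k:ℝ)| := by
          rw [← Int.cast_abs]
          exact_mod_cast Int.one_le_abs hk0
        have hpi : (1:ℝ) ≤ |Real.pi| := by
          rw [abs_of_pos Real.pi_pos]; linarith [Real.pi_gt_three]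
        nlinarith
      linarith
    rw [if_neg hexp]
    -- φ(w/n) estimates
    have hφn : ‖phi (w / n) - 1‖ < ε₁ := by
      have := hδ (show dist (w / (n:ℂ)) 0 < δ by
        rw [dist_zero_right]; exact lt_of_lt_of_le hwn (min_le_left _ _))
      rwa [phi_zero, dist_eq_norm] at this
    have hφnlb : (1:ℝ)/2 ≤ ‖phi (w / n)‖ := by
      have h1 : ε₁ ≤ 1/2 := min_le_left _ _
      have h2 : 1 - ‖phi (w / n)‖ ≤ ‖phi (w / n) - 1‖ := by
        calc 1 - ‖phi (w / n)‖ = ‖(1:ℂ)‖ - ‖phi (w / n)‖ := by rw [norm_one]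
          _ ≤ ‖(1:ℂ) - phi (w / n)‖ := norm_sub_norm_le _ _
          _ = ‖phi (w / n) - 1‖ := norm_sub_rev _ _
      linarith
    have hφn0 : phi (w / n) ≠ 0 := by
      intro h; rw [h] at hφnlb; simp at hφnlb; linarith
    -- rewrite the expression
    have hnum : 1 - Complex.exp w = -(w * phi w) := by
      have h1 := exp_sub_one_eq w
      linear_combination -h1
    have hden : (n:ℂ) * (1 - Complex.exp (w / n)) = -(w * phi (w / n)) := by
      have h1 := exp_sub_one_eq (w / n)
      have h2 : (n:ℂ) * (w / (n:ℂ)) = w := by field_simp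
      linear_combination (-(n:ℂ)) * h1 - phi (w / n) * h2
    rw [hnum, hden, neg_div_neg_eq, mul_div_mul_left _ _ hw0]
    have hCw : ‖phi w‖ ≤ C' := by
      refine le_trans (hC w ?_) (le_max_left _ _)
      rwa [Metric.mem_closedBall, dist_zero_right]
    rw [dist_eq_norm]
    have heq : phi w - phi w / phi (w / n) = phi w * (phi (w / n) - 1) / phi (w / n) := by
      field_simp
    rw [heq]
    rw [norm_div, norm_mul]
    have hb1 : ‖phi w‖ * ‖phi (w / n) - 1‖ / ‖phi (w / n)‖ ≤ C' * ε₁ / (1/2) := by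
      gcongr
    refine lt_of_le_of_lt hb1 ?_
    have hε₁le : ε₁ ≤ ε / (2 * (C' + 1)) := min_le_right _ _
    have h3 : C' * ε₁ / (1/2) = 2 * (C' * ε₁) := by ring
    rw [h3]
    have h4 : C' * ε₁ ≤ C' * ε / (2 * (C' + 1)) := by
      rw [mul_div_assoc]; gcongr
    have h5 : C' * ε / (2 * (C' + 1)) < ε / 2 := by
      rw [div_lt_div_iff₀ (by positivity) (by norm_num)]
      nlinarith
    linarith

lemma f_eq (ζ : ℂ) (hζ : ‖ζ‖ = 1) (n : ℕ) (hn : 1 ≤ n) (u v : ℂ) :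
    (if (starRingEnd ℂ) (ζ * Complex.exp (v / n)) * (ζ * Complex.exp (u / n)) = 1 then (1:ℂ)
     else (1 - (starRingEnd ℂ) (ζ * Complex.exp (v / n)) ^ n * (ζ * Complex.exp (u / n)) ^ n)
       / ((n : ℂ) * (1 - (starRingEnd ℂ) (ζ * Complex.exp (v / n)) * (ζ * Complex.exp (u / n))))) =
    (if Complex.exp ((u + (starRingEnd ℂ) v) / n) = 1 then 1
     else (1 - Complex.exp (u + (starRingEnd ℂ) v))
       / ((n : ℂ) * (1 - Complex.exp ((u + (starRingEnd ℂ) v) / n)))) := by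
  have hnC : (n:ℂ) ≠ 0 := by exact_mod_cast Nat.one_le_iff_ne_zero.mp hn
  have hζζ : (starRingEnd ℂ) ζ * ζ = 1 := by
    have := Complex.mul_conj ζ
    have h2 : Complex.normSq ζ = 1 := by
      rw [← Complex.sq_norm, hζ]; norm_num
    rw [h2] at this
    rw [mul_comm]
    exact_mod_cast this
  have hb : (starRingEnd ℂ) (ζ * Complex.exp (v / n)) * (ζ * Complex.exp (u / n))
      = Complex.exp ((u + (starRingEnd ℂ) v) / n) := by
    rw [map_mul, ← Complex.exp_conj, mul_mul_mul_comm, hζζ, one_mul, ← Complex.exp_add]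
    congr 1
    rw [map_div₀, Complex.conj_natCast]
    ring
  have hpow : (starRingEnd ℂ) (ζ * Complex.exp (v / n)) ^ n * (ζ * Complex.exp (u / n)) ^ n
      = Complex.exp (u + (starRingEnd ℂ) v) := by
    rw [← mul_pow, hb, ← Complex.exp_nat_mul, mul_div_cancel₀ _ hnC]
  rw [hb, hpow]

/-- Universality for the Lebesgue measure: the kernel ratio
`k_{m,n}(ζe^{u/n}, ζe^{v/n})/k_{m,n}(ζ,ζ) = (1 - conj(z₂)ⁿ z₁ⁿ)/(n(1 - conj(z₂) z₁))`
converges to `(e^{u + conj v} - 1)/(u + conj v)` uniformly on compacts. -/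
theorem lebesgue_kernel_ratio_tendstoUniformlyOn (ζ : ℂ) (hζ : ‖ζ‖ = 1)
    (K : Set (ℂ × ℂ)) (hK : IsCompact K) :
    TendstoUniformlyOn
      (fun (n : ℕ) (p : ℂ × ℂ) =>
        if (starRingEnd ℂ) (ζ * Complex.exp (p.2 / n)) * (ζ * Complex.exp (p.1 / n)) = 1
        then 1
        else (1 - (starRingEnd ℂ) (ζ * Complex.exp (p.2 / n)) ^ n
                * (ζ * Complex.exp (p.1 / n)) ^ n)
          / ((n : ℂ) * (1 - (starRingEnd ℂ) (ζ * Complex.exp (p.2 / n))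
                * (ζ * Complex.exp (p.1 / n)))))
      (fun p =>
        if p.1 + (starRingEnd ℂ) p.2 = 0 then 1
        else (Complex.exp (p.1 + (starRingEnd ℂ) p.2) - 1) / (p.1 + (starRingEnd ℂ) p.2))
      atTop K := by
  rw [Metric.tendstoUniformlyOn_iff]
  intro ε hε
  obtain ⟨M, hM⟩ := hK.exists_bound_of_continuousOn
    (f := fun p : ℂ × ℂ => p.1 + (starRingEnd ℂ) p.2)
    (Continuous.continuousOn (continuous_fst.add (Complex.continuous_conj.comp continuous_snd)))
  obtain ⟨N, hN⟩ := key M hε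
  rw [eventually_atTop]
  refine ⟨max N 1, fun n hn p hp => ?_⟩
  have hn1 : 1 ≤ n := le_trans (le_max_right _ _) hn
  have hnN : N ≤ n := le_trans (le_max_left _ _) hn
  have h1 := f_eq ζ hζ n hn1 p.1 p.2
  simp only [h1]
  have h2 : (if p.1 + (starRingEnd ℂ) p.2 = 0 then (1:ℂ)
      else (Complex.exp (p.1 + (starRingEnd ℂ) p.2) - 1) / (p.1 + (starRingEnd ℂ) p.2))
      = phi (p.1 + (starRingEnd ℂ) p.2) := rfl
  rw [h2]
  exact hN n hnN _ (hM p hp)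
end

section
/- Let p be a polynomial of degree n with no zeros in the closed unit disk, let λ ∈ D, and let ν = |p|^{-2} dm be the measure with density 1/|p(ξ)|² on T; assume ν(T) = 1. Then ∫_T |p(λ)/p(ξ) - 1|² P_λ(ξ) dm(ξ) = exp(K_ν(λ)) - 1, where K_ν(λ) = log(∫_T P_λ dν) - ∫_T log(|p(ξ)|^{-2}) P_λ(ξ) dm(ξ) is the entropy function of ν at λ. -/
open MeasureTheory Complex Real
open scoped NNReal ENNReal

/-- Normalized Lebesgue (arc-length) measure on the unit circle `T ⊂ ℂ`, `m(T) = 1`. -/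
noncomputable def circleMeasure : Measure ℂ :=
  (ENNReal.ofReal (2 * Real.pi))⁻¹ •
    Measure.map (fun θ : ℝ => Complex.exp (θ * Complex.I))
      (volume.restrict (Set.Ioc 0 (2 * Real.pi)))

/-- Poisson kernel `P_z(ξ) = (1-|z|²)/|1 - conj(ξ) z|²`. -/
noncomputable def circlePoissonKernel (z ξ : ℂ) : ℝ :=
  (1 - ‖z‖ ^ 2) / ‖1 - (starRingEnd ℂ) ξ * z‖ ^ 2

lemma coe_norm_sq (w : ℂ) : ((‖w‖ : ℂ) ^ 2) = w * (starRingEnd ℂ) w := by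
  rw [Complex.mul_conj]; norm_cast; rw [Complex.normSq_eq_norm_sq]

lemma kernel_identity (lam ξ : ℂ) (hξ : ‖ξ‖ = 1) (hlam : ‖lam‖ < 1) :
    ξ * ((ξ - lam)⁻¹ + (starRingEnd ℂ) lam / (1 - (starRingEnd ℂ) lam * ξ))
      = (circlePoissonKernel lam ξ : ℂ) := by
  have hξ0 : ξ ≠ 0 := by
    intro h; rw [h] at hξ; simp at hξ
  have hne : ξ - lam ≠ 0 := by
    rw [sub_ne_zero]; intro h; rw [← h] at hlam; exact hlam.ne hξ
  have h1 : 1 - (starRingEnd ℂ) lam * ξ ≠ 0 := by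
    intro h
    have : ‖(starRingEnd ℂ) lam * ξ‖ = 1 := by
      have : (starRingEnd ℂ) lam * ξ = 1 := by linear_combination -h
      rw [this]; simp
    rw [norm_mul, RCLike.norm_conj, hξ, mul_one] at this
    exact absurd this (ne_of_lt hlam)
  have hconj : (starRingEnd ℂ) ξ = ξ⁻¹ := by
    apply eq_inv_of_mul_eq_one_left
    rw [Complex.conj_mul']
    norm_cast
    rw [hξ]; norm_num
  have hcc : (starRingEnd ℂ) (1 - (starRingEnd ℂ) ξ * lam) = 1 - ξ * (starRingEnd ℂ) lam := by
    simp [map_sub, map_mul]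
  unfold circlePoissonKernel
  push_cast
  rw [coe_norm_sq, coe_norm_sq, hcc, hconj]
  have h1' : 1 - ξ * (starRingEnd ℂ) lam ≠ 0 := by
    rw [mul_comm ξ ((starRingEnd ℂ) lam)]; exact h1
  have hfact : 1 - ξ⁻¹ * lam = ξ⁻¹ * (ξ - lam) := by field_simp
  rw [hfact]
  field_simp
  ring

lemma norm_circleMap_one (θ : ℝ) : ‖circleMap 0 1 θ‖ = 1 := by
  simp [circleMap, Complex.norm_exp_ofReal_mul_I]

lemma poisson_rep (f : ℂ → ℂ) (hf : DiffContOnCl ℂ f (Metric.ball 0 1))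
    (lam : ℂ) (hlam : ‖lam‖ < 1) :
    ∫ θ in (0:ℝ)..(2*π), (circlePoissonKernel lam (circleMap 0 1 θ) : ℂ) * f (circleMap 0 1 θ)
      = (2*π) * f lam := by
  have hmem : lam ∈ Metric.ball (0:ℂ) 1 := by simpa using hlam
  have hball : closure (Metric.ball (0:ℂ) 1) = Metric.closedBall 0 1 :=
    closure_ball 0 one_ne_zero
  have hden : ∀ z ∈ Metric.closedBall (0:ℂ) 1, 1 - (starRingEnd ℂ) lam * z ≠ 0 := by
    intro z hz h
    have hz1 : ‖z‖ ≤ 1 := by simpa using hz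
    have : ‖(starRingEnd ℂ) lam * z‖ = 1 := by
      have : (starRingEnd ℂ) lam * z = 1 := by linear_combination -h
      rw [this]; simp
    rw [norm_mul, RCLike.norm_conj] at this
    nlinarith [norm_nonneg (lam), norm_nonneg z]
  have hq : DifferentiableOn ℂ
      (fun z => (starRingEnd ℂ) lam / (1 - (starRingEnd ℂ) lam * z)) (Metric.closedBall 0 1) :=
    DifferentiableOn.div (differentiableOn_const _)
      ((differentiable_const (1:ℂ)).sub ((differentiable_id.const_mul _))).differentiableOn hden
  set F : ℂ → ℂ := fun z =>
    (z - lam) * ((starRingEnd ℂ) lam / (1 - (starRingEnd ℂ) lam * z) * f z) with hFdef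
  have hF : DiffContOnCl ℂ F (Metric.ball 0 1) := by
    constructor
    · exact ((differentiable_id.sub_const lam).differentiableOn).mul
        ((hq.mono Metric.ball_subset_closedBall).mul hf.differentiableOn)
    · rw [hball]
      exact ((continuous_id.sub continuous_const).continuousOn).mul
        ((hq.continuousOn).mul (hball ▸ hf.continuousOn))
  have h1 := hf.circleIntegral_sub_inv_smul hmem
  have h2 := hF.circleIntegral_sub_inv_smul hmem
  have hF0 : F lam = 0 := by simp [hFdef]
  rw [hF0, smul_zero] at h2
  simp only [circleIntegral, deriv_circleMap] at h1 h2
  -- continuity facts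
  have hcm : Continuous (circleMap 0 1) := continuous_circleMap 0 1
  have hcf : Continuous (fun θ => f (circleMap 0 1 θ)) := by
    apply (hball ▸ hf.continuousOn).comp_continuous hcm
    intro θ
    simp [Metric.mem_closedBall, norm_circleMap_one θ |>.le, dist_eq_norm]
  have hnei : ∀ θ : ℝ, circleMap 0 1 θ - lam ≠ 0 := by
    intro θ h
    rw [sub_eq_zero] at h
    rw [← h] at hlam
    exact hlam.ne (norm_circleMap_one θ)
  have hinv : Continuous (fun θ => (circleMap 0 1 θ - lam)⁻¹) :=
    Continuous.inv₀ (hcm.sub continuous_const) hnei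
  have hi1 : IntervalIntegrable
      (fun θ => (circleMap 0 1 θ * I) • ((circleMap 0 1 θ - lam)⁻¹ • f (circleMap 0 1 θ)))
      volume 0 (2*π) :=
    (((hcm.mul continuous_const).smul (hinv.smul hcf))).intervalIntegrable _ _
  have hi2 : IntervalIntegrable
      (fun θ => (circleMap 0 1 θ * I) • ((circleMap 0 1 θ - lam)⁻¹ • F (circleMap 0 1 θ)))
      volume 0 (2*π) := by
    apply Continuous.intervalIntegrable
    apply (hcm.mul continuous_const).smul
    apply hinv.smul
    apply (hcm.sub continuous_const).mul
    apply Continuous.mul _ hcf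
    apply Continuous.div continuous_const ((continuous_const).sub (continuous_const.mul hcm))
    intro θ
    exact hden _ (by simp [Metric.mem_closedBall, dist_eq_norm, (norm_circleMap_one θ).le])
  have hsum := intervalIntegral.integral_add hi1 hi2
  rw [h1, h2, add_zero] at hsum
  have hptw : (fun θ => (circleMap 0 1 θ * I) • ((circleMap 0 1 θ - lam)⁻¹ • f (circleMap 0 1 θ))
        + (circleMap 0 1 θ * I) • ((circleMap 0 1 θ - lam)⁻¹ • F (circleMap 0 1 θ)))
      = fun θ => I * ((circlePoissonKernel lam (circleMap 0 1 θ) : ℂ) * f (circleMap 0 1 θ)) := by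
    funext θ
    have h3 := kernel_identity lam (circleMap 0 1 θ) (norm_circleMap_one θ) hlam
    simp only [smul_eq_mul, hFdef]
    rw [← h3]
    have := hnei θ
    field_simp
  rw [hptw, intervalIntegral.integral_const_mul, smul_eq_mul] at hsum
  apply mul_left_cancel₀ Complex.I_ne_zero
  rw [hsum]; push_cast; ring

lemma integral_circleMeasure {E : Type*} [NormedAddCommGroup E] [NormedSpace ℝ E]
    (g : ℂ → E)
    (hg : AEStronglyMeasurable g (Measure.map (fun θ : ℝ => Complex.exp (θ * Complex.I))
      (volume.restrict (Set.Ioc 0 (2 * Real.pi))))) :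
    ∫ ξ, g ξ ∂circleMeasure = (2*π)⁻¹ • ∫ θ in (0:ℝ)..(2*π), g (circleMap 0 1 θ) := by
  rw [circleMeasure, integral_smul_measure,
    MeasureTheory.integral_map (by fun_prop) hg,
    intervalIntegral.integral_of_le (by positivity)]
  congr 1
  · rw [ENNReal.toReal_inv, ENNReal.toReal_ofReal (by positivity)]
  · apply setIntegral_congr_fun measurableSet_Ioc
    intro θ _
    simp [circleMap]

lemma slit_aux {a z : ℂ} (ha : 1 < ‖a‖) (hz : ‖z‖ ≤ 1) :
    1 - z / a ∈ Complex.slitPlane := by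
  rw [Complex.mem_slitPlane_iff]
  left
  have h1 : ‖z / a‖ < 1 := by
    rw [norm_div]
    rw [div_lt_one (by linarith)]
    linarith
  have h2 : (z / a).re ≤ ‖z / a‖ := Complex.re_le_norm _
  simp only [Complex.sub_re, Complex.one_re]
  linarith

lemma exists_log (n : ℕ) : ∀ (p : Polynomial ℂ), p.natDegree = n →
    (∀ z : ℂ, ‖z‖ ≤ 1 → p.eval z ≠ 0) →
    ∃ g : ℂ → ℂ, (∀ z : ℂ, ‖z‖ ≤ 1 → DifferentiableAt ℂ g z) ∧
      ∀ z : ℂ, ‖z‖ ≤ 1 → Complex.exp (g z) = p.eval z := by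
  induction n with
  | zero =>
    intro p hdeg hfree
    obtain ⟨c, rfl⟩ := Polynomial.natDegree_eq_zero.mp hdeg
    have hc : c ≠ 0 := by simpa using hfree 0 (by simp)
    exact ⟨fun _ => Complex.log c, fun z _ => differentiableAt_const _,
      fun z _ => by simp [Complex.exp_log hc]⟩
  | succ n ih =>
    intro p hdeg hfree
    have hp0 : p ≠ 0 := fun h => by simp [h] at hdeg
    obtain ⟨a, ha⟩ := Complex.exists_root (f := p)
      (by rw [Polynomial.degree_eq_natDegree hp0, hdeg]; exact_mod_cast Nat.succ_pos n)
    have hanorm : 1 < ‖a‖ := by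
      by_contra h
      exact hfree a (not_lt.mp h) ha
    have ha0 : a ≠ 0 := by
      intro h; rw [h, norm_zero] at hanorm; linarith
    obtain ⟨q, hq⟩ := Polynomial.dvd_iff_isRoot.mpr ha
    have hq0 : q ≠ 0 := by
      intro h; rw [h, mul_zero] at hq
      exact hfree 0 (by simp) (by simp [hq])
    have hqdeg : q.natDegree = n := by
      have := Polynomial.natDegree_mul (p := Polynomial.X - Polynomial.C a) (q := q)
        (Polynomial.X_sub_C_ne_zero a) hq0
      rw [← hq, hdeg, Polynomial.natDegree_X_sub_C] at this
      omega
    have hqfree : ∀ z : ℂ, ‖z‖ ≤ 1 → q.eval z ≠ 0 := by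
      intro z hz h
      apply hfree z hz
      rw [hq]; simp [h]
    obtain ⟨g, hg1, hg2⟩ := ih q hqdeg hqfree
    refine ⟨fun z => g z + (Complex.log (-a) + Complex.log (1 - z / a)), ?_, ?_⟩
    · intro z hz
      apply (hg1 z hz).add
      apply (differentiableAt_const _).add
      exact ((differentiableAt_const _).sub (differentiableAt_id.div_const a)).clog
        (slit_aux hanorm hz)
    · intro z hz
      have hslit := slit_aux hanorm hz
      have hne : 1 - z / a ≠ 0 := Complex.slitPlane_ne_zero hslit
      rw [Complex.exp_add, Complex.exp_add, hg2 z hz,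
        Complex.exp_log (neg_ne_zero.mpr ha0), Complex.exp_log hne, hq]
      simp only [Polynomial.eval_mul, Polynomial.eval_sub, Polynomial.eval_X, Polynomial.eval_C]
      field_simp
      ring

variable {p : Polynomial ℂ} {lam : ℂ}

lemma conj_ne (hlam : ‖lam‖ < 1) (θ : ℝ) : 1 - (starRingEnd ℂ) (circleMap 0 1 θ) * lam ≠ 0 := by
  intro h
  have : ‖(starRingEnd ℂ) (circleMap 0 1 θ) * lam‖ = 1 := by
    have : (starRingEnd ℂ) (circleMap 0 1 θ) * lam = 1 := by linear_combination -h
    rw [this]; simp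
  rw [norm_mul, RCLike.norm_conj, norm_circleMap_one, one_mul] at this
  exact hlam.ne this

lemma P_cont (hlam : ‖lam‖ < 1) : Continuous (fun θ => circlePoissonKernel lam (circleMap 0 1 θ)) := by
  unfold circlePoissonKernel
  apply Continuous.div continuous_const
  · exact (continuous_const.sub ((Complex.continuous_conj.comp (continuous_circleMap 0 1)).mul
      continuous_const)).norm.pow 2
  · intro θ
    exact pow_ne_zero 2 (norm_ne_zero_iff.mpr (conj_ne hlam θ))

lemma P_pos (hlam : ‖lam‖ < 1) (θ : ℝ) : 0 < circlePoissonKernel lam (circleMap 0 1 θ) := by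
  unfold circlePoissonKernel
  apply div_pos
  · nlinarith [norm_nonneg lam, hlam]
  · exact pow_pos (norm_pos_iff.mpr (conj_ne hlam θ)) 2

lemma re_intervalIntegral {f : ℝ → ℂ} (hf : IntervalIntegrable f volume 0 (2*π)) :
    ∫ θ in (0:ℝ)..(2*π), (f θ).re = (∫ θ in (0:ℝ)..(2*π), f θ).re := by
  rw [intervalIntegral.integral_of_le (by positivity),
    intervalIntegral.integral_of_le (by positivity)]
  have := _root_.integral_re (μ := volume.restrict (Set.Ioc (0:ℝ) (2*π))) (f := f) hf.1
  simpa [RCLike.re_to_complex] using this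

lemma fact_A (hlam : ‖lam‖ < 1) :
    ∫ θ in (0:ℝ)..(2*π), circlePoissonKernel lam (circleMap 0 1 θ) = 2*π := by
  have h := poisson_rep (fun _ => 1) (diffContOnCl_const) lam hlam
  simp only [mul_one] at h
  have hi : IntervalIntegrable (fun θ => ((circlePoissonKernel lam (circleMap 0 1 θ) : ℝ) : ℂ))
      volume 0 (2*π) :=
    (Complex.continuous_ofReal.comp (P_cont hlam)).intervalIntegrable _ _
  have := re_intervalIntegral hi
  rw [h] at this
  simpa using this

lemma cont_circ_eval (hfree : ∀ z : ℂ, ‖z‖ ≤ 1 → p.eval z ≠ 0) :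
    Continuous (fun θ => p.eval (circleMap 0 1 θ)) :=
  (p.continuous).comp (continuous_circleMap 0 1)

lemma fact_B (hfree : ∀ z : ℂ, ‖z‖ ≤ 1 → p.eval z ≠ 0) (hlam : ‖lam‖ < 1) :
    ∫ θ in (0:ℝ)..(2*π),
      circlePoissonKernel lam (circleMap 0 1 θ) * (p.eval lam / p.eval (circleMap 0 1 θ)).re
      = 2*π := by
  have hball : closure (Metric.ball (0:ℂ) 1) = Metric.closedBall 0 1 :=
    closure_ball 0 one_ne_zero
  have hdc : DiffContOnCl ℂ (fun ξ => p.eval lam / p.eval ξ) (Metric.ball 0 1) := by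
    constructor
    · exact DifferentiableOn.div (differentiableOn_const _) (p.differentiable.differentiableOn)
        (fun z hz => hfree z (by simpa using Metric.ball_subset_closedBall hz))
    · rw [hball]
      exact ContinuousOn.div continuousOn_const (p.continuous.continuousOn)
        (fun z hz => hfree z (by simpa using hz))
  have h := poisson_rep _ hdc lam hlam
  rw [div_self (hfree lam hlam.le), mul_one] at h
  have hi : IntervalIntegrable (fun θ =>
      ((circlePoissonKernel lam (circleMap 0 1 θ) : ℝ) : ℂ) * (p.eval lam / p.eval (circleMap 0 1 θ)))
      volume 0 (2*π) := by
    apply Continuous.intervalIntegrable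
    exact (Complex.continuous_ofReal.comp (P_cont hlam)).mul
      (Continuous.div continuous_const (cont_circ_eval hfree)
        (fun θ => hfree _ (norm_circleMap_one θ).le))
  have hre := re_intervalIntegral hi
  rw [h] at hre
  have heq : ∀ θ : ℝ, (((circlePoissonKernel lam (circleMap 0 1 θ) : ℝ) : ℂ)
      * (p.eval lam / p.eval (circleMap 0 1 θ))).re
      = circlePoissonKernel lam (circleMap 0 1 θ) * (p.eval lam / p.eval (circleMap 0 1 θ)).re :=
    fun θ => Complex.re_ofReal_mul _ _
  rw [intervalIntegral.integral_congr (fun θ _ => heq θ)] at hre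
  rw [hre]; simp

lemma fact_C (hfree : ∀ z : ℂ, ‖z‖ ≤ 1 → p.eval z ≠ 0) (hlam : ‖lam‖ < 1) :
    ∫ θ in (0:ℝ)..(2*π),
      circlePoissonKernel lam (circleMap 0 1 θ) * Real.log ‖p.eval (circleMap 0 1 θ)‖
      = 2*π * Real.log ‖p.eval lam‖ := by
  obtain ⟨g, hg1, hg2⟩ := exists_log p.natDegree p rfl hfree
  have hlog : ∀ z : ℂ, ‖z‖ ≤ 1 → (g z).re = Real.log ‖p.eval z‖ := by
    intro z hz
    rw [← hg2 z hz]
    rw [Complex.norm_exp, Real.log_exp]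
  have hdc : DiffContOnCl ℂ g (Metric.ball 0 1) := by
    constructor
    · exact fun z hz => (hg1 z (by simpa using Metric.ball_subset_closedBall hz)).differentiableWithinAt
    · rw [closure_ball 0 one_ne_zero]
      exact fun z hz => ((hg1 z (by simpa using hz)).continuousAt).continuousWithinAt
  have h := poisson_rep _ hdc lam hlam
  have hgc : Continuous (fun θ => g (circleMap 0 1 θ)) := by
    rw [continuous_iff_continuousAt]
    intro θ
    exact ((hg1 _ (norm_circleMap_one θ).le).continuousAt).comp (continuous_circleMap 0 1).continuousAt
  have hi : IntervalIntegrable (fun θ =>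
      ((circlePoissonKernel lam (circleMap 0 1 θ) : ℝ) : ℂ) * g (circleMap 0 1 θ)) volume 0 (2*π) :=
    ((Complex.continuous_ofReal.comp (P_cont hlam)).mul hgc).intervalIntegrable _ _
  have hre := re_intervalIntegral hi
  rw [h] at hre
  have : ∀ θ : ℝ, (((circlePoissonKernel lam (circleMap 0 1 θ) : ℝ) : ℂ) * g (circleMap 0 1 θ)).re
      = circlePoissonKernel lam (circleMap 0 1 θ) * Real.log ‖p.eval (circleMap 0 1 θ)‖ := by
    intro θ
    rw [Complex.re_ofReal_mul, hlog _ (norm_circleMap_one θ).le]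
  rw [intervalIntegral.integral_congr (fun θ _ => this θ)] at hre
  have h2 : (2*(π:ℂ)*g lam) = ((2*π:ℝ):ℂ)*g lam := by push_cast; ring
  rw [hre, h2, Complex.re_ofReal_mul, hlog lam hlam.le]


/-- Lemma 2.3: for a zero-free polynomial `p` with `ν = |p|⁻² dm` a probability measure,
`∫ |p(λ)/p(ξ) - 1|² P_λ dm = exp(K_ν(λ)) - 1`. -/
theorem entropy_identity_for_bernstein_szego (n : ℕ) (p : Polynomial ℂ)
    (hdeg : p.natDegree = n) (hfree : ∀ z : ℂ, ‖z‖ ≤ 1 → p.eval z ≠ 0)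
    (lam : ℂ) (hlam : ‖lam‖ < 1)
    (hprob : IsProbabilityMeasure
      (circleMeasure.withDensity fun ξ => ENNReal.ofReal (1 / ‖p.eval ξ‖ ^ 2))) :
    ∫ ξ, ‖p.eval lam / p.eval ξ - 1‖ ^ 2 * circlePoissonKernel lam ξ ∂circleMeasure
      = Real.exp
          (Real.log (∫ ξ, circlePoissonKernel lam ξ
              ∂(circleMeasure.withDensity fun ξ => ENNReal.ofReal (1 / ‖p.eval ξ‖ ^ 2)))
            - ∫ ξ, Real.log ((‖p.eval ξ‖ ^ 2)⁻¹) * circlePoissonKernel lam ξ ∂circleMeasure)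
        - 1 := by
  clear hdeg hprob
  have hπ : (0:ℝ) < 2*π := by positivity
  -- measurability
  have hmeval : Measurable (fun ξ : ℂ => p.eval ξ) := p.continuous.measurable
  have hmP : Measurable (fun ξ : ℂ => circlePoissonKernel lam ξ) := by
    unfold circlePoissonKernel
    exact Measurable.div measurable_const
      (((measurable_const.sub ((Complex.continuous_conj.measurable).mul measurable_const)).norm).pow measurable_const)
  have hm1 : Measurable (fun ξ : ℂ => ‖p.eval lam / p.eval ξ - 1‖ ^ 2 * circlePoissonKernel lam ξ) :=
    ((((measurable_const.div hmeval).sub measurable_const).norm.pow measurable_const).mul hmP)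
  have hm2 : Measurable (fun ξ : ℂ => (1 / ‖p.eval ξ‖ ^ 2) * circlePoissonKernel lam ξ) :=
    ((measurable_const.div (hmeval.norm.pow measurable_const)).mul hmP)
  have hm3 : Measurable (fun ξ : ℂ => Real.log ((‖p.eval ξ‖ ^ 2)⁻¹) * circlePoissonKernel lam ξ) :=
    ((Real.measurable_log.comp ((hmeval.norm.pow measurable_const).inv)).mul hmP)
  -- continuity on the circle
  have hQc : Continuous (fun θ => p.eval (circleMap 0 1 θ)) := cont_circ_eval hfree
  have hQne : ∀ θ : ℝ, p.eval (circleMap 0 1 θ) ≠ 0 :=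
    fun θ => hfree _ (norm_circleMap_one θ).le
  have hQnorm : Continuous (fun θ => ‖p.eval (circleMap 0 1 θ)‖) := hQc.norm
  have hPc := P_cont (lam := lam) hlam
  have hic1 : IntervalIntegrable
      (fun θ => (1 / ‖p.eval (circleMap 0 1 θ)‖ ^ 2) * circlePoissonKernel lam (circleMap 0 1 θ))
      volume 0 (2*π) := by
    apply Continuous.intervalIntegrable
    exact (Continuous.div continuous_const (hQnorm.pow 2)
      (fun θ => pow_ne_zero 2 (norm_ne_zero_iff.mpr (hQne θ)))).mul hPc
  have hic2 : IntervalIntegrable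
      (fun θ => circlePoissonKernel lam (circleMap 0 1 θ) * (p.eval lam / p.eval (circleMap 0 1 θ)).re)
      volume 0 (2*π) := by
    apply Continuous.intervalIntegrable
    exact hPc.mul (Complex.continuous_re.comp (Continuous.div continuous_const hQc hQne))
  have hic3 : IntervalIntegrable (fun θ => circlePoissonKernel lam (circleMap 0 1 θ)) volume 0 (2*π) :=
    hPc.intervalIntegrable _ _
  set J := ∫ θ in (0:ℝ)..(2*π),
    (1 / ‖p.eval (circleMap 0 1 θ)‖ ^ 2) * circlePoissonKernel lam (circleMap 0 1 θ) with hJdef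
  have hJpos : 0 < J := by
    apply intervalIntegral.intervalIntegral_pos_of_pos_on hic1 _ hπ
    intro θ _
    exact mul_pos (div_pos one_pos (pow_pos (norm_pos_iff.mpr (hQne θ)) 2)) (P_pos hlam θ)
  have hplam : 0 < ‖p.eval lam‖ := norm_pos_iff.mpr (hfree lam hlam.le)
  -- transfer the three circleMeasure integrals
  have t1 : ∫ ξ, ‖p.eval lam / p.eval ξ - 1‖ ^ 2 * circlePoissonKernel lam ξ ∂circleMeasure
      = (2*π)⁻¹ • ∫ θ in (0:ℝ)..(2*π),
          ‖p.eval lam / p.eval (circleMap 0 1 θ) - 1‖ ^ 2 * circlePoissonKernel lam (circleMap 0 1 θ) :=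
    integral_circleMeasure _ hm1.aestronglyMeasurable
  have t3 : ∫ ξ, Real.log ((‖p.eval ξ‖ ^ 2)⁻¹) * circlePoissonKernel lam ξ ∂circleMeasure
      = (2*π)⁻¹ • ∫ θ in (0:ℝ)..(2*π),
          Real.log ((‖p.eval (circleMap 0 1 θ)‖ ^ 2)⁻¹) * circlePoissonKernel lam (circleMap 0 1 θ) :=
    integral_circleMeasure _ hm3.aestronglyMeasurable
  have t2 : ∫ ξ, circlePoissonKernel lam ξ
        ∂(circleMeasure.withDensity fun ξ => ENNReal.ofReal (1 / ‖p.eval ξ‖ ^ 2))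
      = ∫ ξ, (1 / ‖p.eval ξ‖ ^ 2) * circlePoissonKernel lam ξ ∂circleMeasure := by
    have hrfl : (fun ξ : ℂ => ENNReal.ofReal (1 / ‖p.eval ξ‖ ^ 2))
        = (fun ξ : ℂ => ((Real.toNNReal (1 / ‖p.eval ξ‖ ^ 2) : ℝ≥0) : ℝ≥0∞)) := rfl
    rw [hrfl]
    refine (integral_withDensity_eq_integral_smul
      ((measurable_const.div (hmeval.norm.pow measurable_const)).real_toNNReal)
      (fun ξ => circlePoissonKernel lam ξ)).trans ?_
    congr 1
    funext ξ
    simp only [Pi.div_apply]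
    rw [NNReal.smul_def, Real.coe_toNNReal _ (by positivity), smul_eq_mul]
  have t2' : ∫ ξ, circlePoissonKernel lam ξ
        ∂(circleMeasure.withDensity fun ξ => ENNReal.ofReal (1 / ‖p.eval ξ‖ ^ 2))
      = (2*π)⁻¹ * J := by
    rw [t2, integral_circleMeasure _ hm2.aestronglyMeasurable, smul_eq_mul]
  -- interval-level computation of the LHS
  have hptw : ∀ θ : ℝ,
      ‖p.eval lam / p.eval (circleMap 0 1 θ) - 1‖ ^ 2 * circlePoissonKernel lam (circleMap 0 1 θ)
      = ‖p.eval lam‖ ^ 2 * ((1 / ‖p.eval (circleMap 0 1 θ)‖ ^ 2) * circlePoissonKernel lam (circleMap 0 1 θ))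
        - 2 * (circlePoissonKernel lam (circleMap 0 1 θ) * (p.eval lam / p.eval (circleMap 0 1 θ)).re)
        + circlePoissonKernel lam (circleMap 0 1 θ) := by
    intro θ
    set A := p.eval lam / p.eval (circleMap 0 1 θ) with hA
    have e1 : ‖A - 1‖ ^ 2 = ‖A‖ ^ 2 - 2 * A.re + 1 := by
      have hns : ∀ w : ℂ, ‖w‖ ^ 2 = Complex.normSq w := fun w => by
        rw [Complex.sq_norm]
      rw [hns, hns, Complex.normSq_sub]
      simp [Complex.normSq_one]
      ring
    have e2 : ‖A‖ ^ 2 = ‖p.eval lam‖ ^ 2 * (1 / ‖p.eval (circleMap 0 1 θ)‖ ^ 2) := by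
      rw [hA, norm_div, div_pow]
      field_simp
    rw [e1, e2]
    ring
  have hLHS : ∫ θ in (0:ℝ)..(2*π),
      ‖p.eval lam / p.eval (circleMap 0 1 θ) - 1‖ ^ 2 * circlePoissonKernel lam (circleMap 0 1 θ)
      = ‖p.eval lam‖ ^ 2 * J - 2 * (2*π) + 2*π := by
    rw [intervalIntegral.integral_congr (fun θ _ => hptw θ)]
    rw [intervalIntegral.integral_add ((hic1.const_mul _).sub (hic2.const_mul 2)) hic3,
      intervalIntegral.integral_sub (hic1.const_mul _) (hic2.const_mul 2),
      intervalIntegral.integral_const_mul, intervalIntegral.integral_const_mul,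
      fact_A hlam, fact_B hfree hlam]
  -- interval-level computation of the log integral
  have hlogint : ∫ θ in (0:ℝ)..(2*π),
      Real.log ((‖p.eval (circleMap 0 1 θ)‖ ^ 2)⁻¹) * circlePoissonKernel lam (circleMap 0 1 θ)
      = -2 * (2*π * Real.log ‖p.eval lam‖) := by
    have hptw2 : ∀ θ : ℝ,
        Real.log ((‖p.eval (circleMap 0 1 θ)‖ ^ 2)⁻¹) * circlePoissonKernel lam (circleMap 0 1 θ)
        = -2 * (circlePoissonKernel lam (circleMap 0 1 θ) * Real.log ‖p.eval (circleMap 0 1 θ)‖) := by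
      intro θ
      rw [Real.log_inv, Real.log_pow]
      push_cast
      ring
    rw [intervalIntegral.integral_congr (fun θ _ => hptw2 θ),
      intervalIntegral.integral_const_mul, fact_C hfree hlam]
  -- put everything together
  rw [t1, t2', t3, hLHS, hlogint, smul_eq_mul, smul_eq_mul]
  have hexp : Real.exp (Real.log ((2*π)⁻¹ * J) - (2*π)⁻¹ * (-2 * (2*π * Real.log ‖p.eval lam‖)))
      = (2*π)⁻¹ * J * ‖p.eval lam‖ ^ 2 := by
    have h1 : (2*π)⁻¹ * (-2 * (2*π * Real.log ‖p.eval lam‖)) = -(2 * Real.log ‖p.eval lam‖) := by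
      field_simp
    rw [h1, sub_neg_eq_add]
    have h2 : 2 * Real.log ‖p.eval lam‖ = Real.log (‖p.eval lam‖ ^ 2) := by
      rw [Real.log_pow]; push_cast; ring
    rw [h2, ← Real.log_mul (by positivity) (by positivity), Real.exp_log (by positivity)]
  rw [hexp]
  field_simp
  ring
end

section
/- Let μ be a probability measure on the unit circle whose support is an infinite set, with orthonormal polynomials φ_k and reproducing kernels k_{μ,n}(z_1,z_2) = Σ_{k=0}^{n-1} conj(φ_k(z_2)) φ_k(z_1). Suppose q is a polynomial of degree n and q̃ a polynomial of degree at most n such that |q̃(z)|² - |q(z)|² = (1-|z|²) k_{μ,n}(z,z) for all z ∈ C. Then q̃ has no zeros in the closed unit disk D ∪ T. -/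
open MeasureTheory

/-- Lemma 2.2 step: if `|q̃(z)|² - |q(z)|² = (1-|z|²) k_{μ,n}(z,z)` where
`k_{μ,n}(z,z) = Σ_{k<n} |φ_k(z)|²` for the orthonormal polynomials `φ_k` of a
probability measure `μ` on the unit circle with infinite support, then `q̃`
has no zeros in the closed unit disk. -/
theorem reflected_polynomial_zero_free (μ : Measure ℂ) [IsProbabilityMeasure μ]
    (hcirc : μ {z : ℂ | ‖z‖ ≠ 1} = 0)
    (hsupp : {x : ℂ | ∀ ε > 0, 0 < μ (Metric.ball x ε)}.Infinite)
    (φ : ℕ → Polynomial ℂ) (hdeg : ∀ k, (φ k).natDegree = k)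
    (horth : ∀ j k, ∫ ξ, (φ j).eval ξ * (starRingEnd ℂ) ((φ k).eval ξ) ∂μ
      = if j = k then 1 else 0)
    (n : ℕ) (q qt : Polynomial ℂ) (hq : q.natDegree = n) (hq0 : q ≠ 0)
    (hqt : qt.natDegree ≤ n)
    (hid : ∀ z : ℂ, ‖qt.eval z‖ ^ 2 - ‖q.eval z‖ ^ 2
      = (1 - ‖z‖ ^ 2) * ∑ k ∈ Finset.range n, ‖(φ k).eval z‖ ^ 2) :
    ∀ z : ℂ, ‖z‖ ≤ 1 → qt.eval z ≠ 0 := by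
  have hφ0 : ∀ w : ℂ, (φ 0).eval w ≠ 0 := by
    intro w hw
    have h0 : φ 0 = Polynomial.C ((φ 0).coeff 0) :=
      Polynomial.eq_C_of_natDegree_eq_zero (hdeg 0)
    have hc : (φ 0).coeff 0 = 0 := by
      rw [h0] at hw; simpa using hw
    have hz0 : φ 0 = 0 := by rw [h0, hc, map_zero]
    have h1 := horth 0 0
    simp [hz0] at h1
  intro z hz habs
  rcases Nat.eq_zero_or_pos n with hn | hn
  · -- n = 0
    subst hn
    have h := hid z
    simp [habs] at h
    have hqz : q.eval z = 0 := h
    have hqc : q = Polynomial.C (q.coeff 0) := Polynomial.eq_C_of_natDegree_eq_zero hq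
    rw [hqc] at hqz
    simp at hqz
    exact hq0 (by rw [hqc, hqz, map_zero])
  · -- n ≥ 1
    have hSpos : ∀ w : ℂ, 0 < ∑ k ∈ Finset.range n, ‖(φ k).eval w‖ ^ 2 := by
      intro w
      have h0 : (0:ℕ) ∈ Finset.range n := Finset.mem_range.mpr hn
      have hle : ‖(φ 0).eval w‖ ^ 2 ≤ ∑ k ∈ Finset.range n, ‖(φ k).eval w‖ ^ 2 :=
        Finset.single_le_sum (f := fun k => ‖(φ k).eval w‖ ^ 2) (fun i _ => by positivity) h0
      have : 0 < ‖(φ 0).eval w‖ ^ 2 :=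
        pow_pos (norm_pos_iff.mpr (hφ0 w)) 2
      linarith
    rcases lt_or_eq_of_le hz with hlt | heq
    · -- ‖z‖ < 1
      have h := hid z
      rw [habs] at h
      simp only [norm_zero] at h
      have h1 : (0:ℝ) < 1 - ‖z‖ ^ 2 := by nlinarith [norm_nonneg z]
      nlinarith [hSpos z, norm_nonneg (q.eval z), sq_nonneg (‖q.eval z‖)]
    · -- ‖z‖ = 1
      have heq1 : ‖z‖ = 1 := heq
      have hqz : q.eval z = 0 := by
        have h := hid z
        rw [habs, heq1] at h
        simpa using h
      obtain ⟨q1, hq1⟩ := Polynomial.dvd_iff_isRoot.mpr hqz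
      obtain ⟨qt1, hqt1⟩ := Polynomial.dvd_iff_isRoot.mpr habs
      set S : ℝ → ℝ := fun t => ∑ k ∈ Finset.range n, ‖(φ k).eval ((t:ℂ) * z)‖ ^ 2 with hS
      set A : ℝ → ℝ := fun t => ‖qt1.eval ((t:ℂ) * z)‖ ^ 2 - ‖q1.eval ((t:ℂ) * z)‖ ^ 2 with hA
      have hnormfac : ∀ (t : ℝ) (p p1 : Polynomial ℂ),
          p = (Polynomial.X - Polynomial.C z) * p1 →
          ‖p.eval ((t:ℂ) * z)‖ ^ 2 = (1 - t) ^ 2 * ‖p1.eval ((t:ℂ) * z)‖ ^ 2 := by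
        intro t p p1 hp
        rw [hp]
        simp only [Polynomial.eval_mul, Polynomial.eval_sub, Polynomial.eval_X,
          Polynomial.eval_C, norm_mul, mul_pow]
        congr 1
        have : (t:ℂ) * z - z = ((t - 1 : ℝ) : ℂ) * z := by push_cast; ring
        rw [this, norm_mul, heq1, mul_one, Complex.norm_real, Real.norm_eq_abs, sq_abs]
        ring
      have hnt : ∀ t : ℝ, ‖(t:ℂ) * z‖ ^ 2 = t ^ 2 := by
        intro t
        rw [norm_mul, heq1, mul_one, Complex.norm_real, Real.norm_eq_abs, sq_abs]
      have key : ∀ t : ℝ, (1 - t) ^ 2 * A t = (1 - t) * (1 + t) * S t := by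
        intro t
        have h := hid ((t:ℂ) * z)
        rw [hnormfac t qt qt1 hqt1, hnormfac t q q1 hq1, hnt t] at h
        simp only [hA, hS]
        nlinarith [h]
      set F : ℝ → ℝ := fun t => (1 - t) * A t - (1 + t) * S t with hF
      have hFcont : Continuous F := by
        have hcS : Continuous S := by
          apply continuous_finset_sum
          intro k _
          exact (((φ k).continuous.comp
            (Complex.continuous_ofReal.mul continuous_const)).norm).pow 2
        have hcA : Continuous A :=
          ((((qt1.continuous.comp
            (Complex.continuous_ofReal.mul continuous_const)).norm).pow 2)).sub
          ((((q1.continuous.comp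
            (Complex.continuous_ofReal.mul continuous_const)).norm).pow 2))
        fun_prop
      have hF0 : ∀ t : ℝ, t ≠ 1 → F t = 0 := by
        intro t ht
        have h1 : (1 - t) ≠ 0 := by intro h; apply ht; linarith
        have hk := key t
        have : (1 - t) * ((1 - t) * A t - (1 + t) * S t) = 0 := by linear_combination hk
        have h2 := mul_eq_zero.mp this
        rcases h2 with h2 | h2
        · exact absurd h2 h1
        · exact h2
      have hFall : F = fun _ => (0:ℝ) := by
        apply Continuous.ext_on (dense_compl_singleton (1:ℝ)) hFcont continuous_const
        intro t ht
        exact hF0 t (by simpa using ht)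
      have hF1 : F 1 = 0 := by rw [hFall]
      have : S 1 = 0 := by
        simp only [hF, hA, hS] at hF1
        nlinarith [hF1]
      have hS1 : 0 < S 1 := by
        have h := hSpos z
        simpa [hS, Complex.ofReal_one, one_mul] using h
      linarith
end
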